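/- The eight-dimensional commutative map Y_{a,b} defined by D = x1 − y2 + X1·Y2, u1 = y1 + (a−b)/D, u2 = y2, U1 = Y1 − ((a−b)/D)·X1, U2 = Y2, v1 = x1, v2 = x2 + (a−b)/D, V1 = X1, V2 = X2 + ((a−b)/D)·Y2 satisfies the parametric Yang-Baxter equation Y^{12}_{a,b} ∘ Y^{13}_{a,c} ∘ Y^{23}_{b,c} = Y^{23}_{b,c} ∘ Y^{13}_{a,c} ∘ Y^{12}_{a,b} on points where all denominators appearing in the compositions are nonzero. -/

import Mathlib

/-- Points of `V = K^4`, with coordinates `(x1, x2, X1, X2)`. -/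
abbrev V4 (K : Type*) := K × K × K × K

/-- The denominator `D = x1 - y2 + X1·Y2` of the commutative Yang-Baxter map. -/
def Dden {K : Type*} [Field K] (p q : V4 K) : K :=
  p.1 - q.2.1 + p.2.2.1 * q.2.2.2

/-- The eight-dimensional commutative Yang-Baxter map `Y_{a,b}` on `V × V`. -/
noncomputable def commYB {K : Type*} [Field K] (a b : K)
    (pq : V4 K × V4 K) : V4 K × V4 K :=
  ((pq.2.1 + (a - b) / Dden pq.1 pq.2, pq.2.2.1,
    pq.2.2.2.1 - ((a - b) / Dden pq.1 pq.2) * pq.1.2.2.1, pq.2.2.2.2),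
   (pq.1.1, pq.1.2.1 + (a - b) / Dden pq.1 pq.2,
    pq.1.2.2.1, pq.1.2.2.2 + ((a - b) / Dden pq.1 pq.2) * pq.2.2.2.2))

noncomputable def commYB12 {K : Type*} [Field K] (a b : K)
    (t : V4 K × V4 K × V4 K) : V4 K × V4 K × V4 K :=
  ((commYB a b (t.1, t.2.1)).1, (commYB a b (t.1, t.2.1)).2, t.2.2)

noncomputable def commYB23 {K : Type*} [Field K] (b c : K)
    (t : V4 K × V4 K × V4 K) : V4 K × V4 K × V4 K :=
  (t.1, (commYB b c (t.2.1, t.2.2)).1, (commYB b c (t.2.1, t.2.2)).2)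

noncomputable def commYB13 {K : Type*} [Field K] (a c : K)
    (t : V4 K × V4 K × V4 K) : V4 K × V4 K × V4 K :=
  ((commYB a c (t.1, t.2.2)).1, t.2.1, (commYB a c (t.1, t.2.2)).2)

set_option maxHeartbeats 4000000 in
/-- The eight-dimensional commutative map `Y_{a,b}` satisfies the parametric
Yang-Baxter equation, on points where all denominators appearing in the
compositions are nonzero. -/
theorem commYB_parametric_yang_baxter {K : Type*} [Field K] (a b c : K)
    (t : V4 K × V4 K × V4 K)
    (h1 : Dden t.2.1 t.2.2 ≠ 0)
    (h2 : Dden (commYB23 b c t).1 (commYB23 b c t).2.2 ≠ 0)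
    (h3 : Dden (commYB13 a c (commYB23 b c t)).1 (commYB13 a c (commYB23 b c t)).2.1 ≠ 0)
    (h4 : Dden t.1 t.2.1 ≠ 0)
    (h5 : Dden (commYB12 a b t).1 (commYB12 a b t).2.2 ≠ 0)
    (h6 : Dden (commYB13 a c (commYB12 a b t)).2.1 (commYB13 a c (commYB12 a b t)).2.2 ≠ 0) :
    commYB12 a b (commYB13 a c (commYB23 b c t)) =
      commYB23 b c (commYB13 a c (commYB12 a b t)) := by
  obtain ⟨⟨x1,x2,X1,X2⟩,⟨y1,y2,Y1,Y2⟩,⟨z1,z2,Z1,Z2⟩⟩ := t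
  simp only [commYB12, commYB23, commYB13, commYB, Dden] at *
  -- key polynomials
  have keyP : (x1 - (y2 + (b - c) / (y1 - z2 + Y1 * Z2)) + X1 * (Y2 + (b - c) / (y1 - z2 + Y1 * Z2) * Z2)) * (y1 - z2 + Y1 * Z2)
      = (x1 - y2 + X1 * Y2) * (y1 - z2 + Y1 * Z2) + (b - c) * (X1 * Z2 - 1) := by
    field_simp; ring
  have hP : (x1 - y2 + X1 * Y2) * (y1 - z2 + Y1 * Z2) + (b - c) * (X1 * Z2 - 1) ≠ 0 :=
    keyP ▸ mul_ne_zero h2 h1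
  have keyQ : (y1 + (a - b) / (x1 - y2 + X1 * Y2) - z2 + (Y1 - (a - b) / (x1 - y2 + X1 * Y2) * X1) * Z2) * (x1 - y2 + X1 * Y2)
      = (x1 - y2 + X1 * Y2) * (y1 - z2 + Y1 * Z2) + (a - b) * (1 - X1 * Z2) := by
    field_simp; ring
  have hQ : (x1 - y2 + X1 * Y2) * (y1 - z2 + Y1 * Z2) + (a - b) * (1 - X1 * Z2) ≠ 0 :=
    keyQ ▸ mul_ne_zero h5 h4
  have hE : x1 - (y2 + (b - c) / (y1 - z2 + Y1 * Z2)) + X1 * (Y2 + (b - c) / (y1 - z2 + Y1 * Z2) * Z2)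
      = ((x1 - y2 + X1 * Y2) * (y1 - z2 + Y1 * Z2) + (b - c) * (X1 * Z2 - 1)) / (y1 - z2 + Y1 * Z2) := by
    rw [eq_div_iff h1]; exact keyP
  have hF : y1 + (a - b) / (x1 - y2 + X1 * Y2) - z2 + (Y1 - (a - b) / (x1 - y2 + X1 * Y2) * X1) * Z2
      = ((x1 - y2 + X1 * Y2) * (y1 - z2 + Y1 * Z2) + (a - b) * (1 - X1 * Z2)) / (x1 - y2 + X1 * Y2) := by
    rw [eq_div_iff h4]; exact keyQ
  rw [hE, hF]
  simp only [div_div_eq_mul_div]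
  have hG : y1 + (a - c) * (y1 - z2 + Y1 * Z2) / ((x1 - y2 + X1 * Y2) * (y1 - z2 + Y1 * Z2) + (b - c) * (X1 * Z2 - 1)) - z2 +
        (Y1 - (a - c) * (y1 - z2 + Y1 * Z2) / ((x1 - y2 + X1 * Y2) * (y1 - z2 + Y1 * Z2) + (b - c) * (X1 * Z2 - 1)) * X1) * Z2
      = ((x1 - y2 + X1 * Y2) * (y1 - z2 + Y1 * Z2) + (a - b) * (1 - X1 * Z2)) * (y1 - z2 + Y1 * Z2)
        / ((x1 - y2 + X1 * Y2) * (y1 - z2 + Y1 * Z2) + (b - c) * (X1 * Z2 - 1)) := by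
    rw [eq_div_iff hP]
    have hc : (a - c) * (y1 - z2 + Y1 * Z2) / ((x1 - y2 + X1 * Y2) * (y1 - z2 + Y1 * Z2) + (b - c) * (X1 * Z2 - 1)) * ((x1 - y2 + X1 * Y2) * (y1 - z2 + Y1 * Z2) + (b - c) * (X1 * Z2 - 1)) = (a - c) * (y1 - z2 + Y1 * Z2) := div_mul_cancel₀ _ hP
    linear_combination (1 - X1 * Z2) * hc
  have hH : x1 - (y2 + (a - c) * (x1 - y2 + X1 * Y2) / ((x1 - y2 + X1 * Y2) * (y1 - z2 + Y1 * Z2) + (a - b) * (1 - X1 * Z2))) +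
        X1 * (Y2 + (a - c) * (x1 - y2 + X1 * Y2) / ((x1 - y2 + X1 * Y2) * (y1 - z2 + Y1 * Z2) + (a - b) * (1 - X1 * Z2)) * Z2)
      = ((x1 - y2 + X1 * Y2) * (y1 - z2 + Y1 * Z2) + (b - c) * (X1 * Z2 - 1)) * (x1 - y2 + X1 * Y2)
        / ((x1 - y2 + X1 * Y2) * (y1 - z2 + Y1 * Z2) + (a - b) * (1 - X1 * Z2)) := by
    rw [eq_div_iff hQ]; field_simp; ring
  rw [hG, hH]
  simp only [div_div_eq_mul_div]
  have hQd1 : ((x1 - y2 + X1 * Y2) * (y1 - z2 + Y1 * Z2) + (a - b) * (1 - X1 * Z2)) * (y1 - z2 + Y1 * Z2) ≠ 0 :=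
    mul_ne_zero hQ h1
  have hPd2 : ((x1 - y2 + X1 * Y2) * (y1 - z2 + Y1 * Z2) + (b - c) * (X1 * Z2 - 1)) * (x1 - y2 + X1 * Y2) ≠ 0 :=
    mul_ne_zero hP h4
  -- abbreviations (syntactic): d1, d2, P, Q
  have s1 : (b - c) / (y1 - z2 + Y1 * Z2)
      + (a - b) * ((x1 - y2 + X1 * Y2) * (y1 - z2 + Y1 * Z2) + (b - c) * (X1 * Z2 - 1))
        / (((x1 - y2 + X1 * Y2) * (y1 - z2 + Y1 * Z2) + (a - b) * (1 - X1 * Z2)) * (y1 - z2 + Y1 * Z2))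
      = (a - c) * (x1 - y2 + X1 * Y2)
        / ((x1 - y2 + X1 * Y2) * (y1 - z2 + Y1 * Z2) + (a - b) * (1 - X1 * Z2)) := by
    rw [div_add_div _ _ h1 hQd1, div_eq_div_iff (mul_ne_zero h1 hQd1) hQ]
    ring
  have s2 : (a - c) * (y1 - z2 + Y1 * Z2)
        / ((x1 - y2 + X1 * Y2) * (y1 - z2 + Y1 * Z2) + (b - c) * (X1 * Z2 - 1))
      = (a - b) / (x1 - y2 + X1 * Y2)
        + (b - c) * ((x1 - y2 + X1 * Y2) * (y1 - z2 + Y1 * Z2) + (a - b) * (1 - X1 * Z2))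
          / (((x1 - y2 + X1 * Y2) * (y1 - z2 + Y1 * Z2) + (b - c) * (X1 * Z2 - 1)) * (x1 - y2 + X1 * Y2)) := by
    rw [div_add_div _ _ h4 hPd2, div_eq_div_iff hP (mul_ne_zero h4 hPd2)]
    ring
  have s3 : (a - b) * ((x1 - y2 + X1 * Y2) * (y1 - z2 + Y1 * Z2) + (b - c) * (X1 * Z2 - 1))
        / (((x1 - y2 + X1 * Y2) * (y1 - z2 + Y1 * Z2) + (a - b) * (1 - X1 * Z2)) * (y1 - z2 + Y1 * Z2))
        * ((a - c) * (y1 - z2 + Y1 * Z2)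
          / ((x1 - y2 + X1 * Y2) * (y1 - z2 + Y1 * Z2) + (b - c) * (X1 * Z2 - 1)))
      = (a - c) * (x1 - y2 + X1 * Y2)
          / ((x1 - y2 + X1 * Y2) * (y1 - z2 + Y1 * Z2) + (a - b) * (1 - X1 * Z2))
        * ((a - b) / (x1 - y2 + X1 * Y2)) := by
    field_simp
  have s4 : (b - c) / (y1 - z2 + Y1 * Z2)
        * ((a - c) * (y1 - z2 + Y1 * Z2)
          / ((x1 - y2 + X1 * Y2) * (y1 - z2 + Y1 * Z2) + (b - c) * (X1 * Z2 - 1)))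
      = (b - c) * ((x1 - y2 + X1 * Y2) * (y1 - z2 + Y1 * Z2) + (a - b) * (1 - X1 * Z2))
          / (((x1 - y2 + X1 * Y2) * (y1 - z2 + Y1 * Z2) + (b - c) * (X1 * Z2 - 1)) * (x1 - y2 + X1 * Y2))
        * ((a - c) * (x1 - y2 + X1 * Y2)
          / ((x1 - y2 + X1 * Y2) * (y1 - z2 + Y1 * Z2) + (a - b) * (1 - X1 * Z2))) := by
    rw [div_mul_div_comm, div_mul_div_comm, div_eq_div_iff (mul_ne_zero h1 hP) (mul_ne_zero hPd2 hQ)]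
    ring
  refine Prod.ext ?_ (Prod.ext ?_ ?_) <;>
    refine Prod.ext ?_ (Prod.ext ?_ (Prod.ext ?_ ?_))
  · linear_combination s1
  · rfl
  · linear_combination (-Y1) * s1 + X1 * s3
  · rfl
  · linear_combination s2
  · linear_combination s1
  · linear_combination (-X1) * s2
  · linear_combination Z2 * s1
  · rfl
  · linear_combination s2
  · rfl
  · linear_combination Y2 * s2 + Z2 * s4
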